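/- Let A be a discrete valuation ring and let S ⊆ A be an n-optimal set, i.e., an n-universal set with exactly n+1 elements. Then S can be ordered to form a Newton sequence: there is an enumeration s_0, s_1, …, s_n of the elements of S such that for every 0 ≤ m ≤ n the set {s_0, …, s_m} is m-universal. -/

import Mathlib

open scoped Classical

/-- A finite subset `S` of an integral domain `A` with field of fractions `K` is
`n`-universal if for every polynomial `P ∈ K[X]` of degree at most `n`, `P` maps `A`
into `A` if and only if `P` maps `S` into `A`. -/
def IsNUniversal (A K : Type*) [CommRing A] [IsDomain A] [Field K] [Algebra A K]
    [IsFractionRing A K] (n : ℕ) (S : Finset A) : Prop :=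
  ∀ P : Polynomial K, P.natDegree ≤ n →
    ((∀ a : A, ∃ b : A, Polynomial.eval (algebraMap A K a) P = algebraMap A K b) ↔
      ∀ s ∈ S, ∃ b : A, Polynomial.eval (algebraMap A K s) P = algebraMap A K b)

open Polynomial Finset IsDiscreteValuationRing

/-- Key step: erasing from an `(n+1)`-universal set an element maximizing the valuation of
the product of differences yields an `n`-universal set. -/
lemma key_erase {A K : Type*} [CommRing A] [IsDomain A] [IsDiscreteValuationRing A] [Field K]
    [Algebra A K] [IsFractionRing A K] (n : ℕ) (S : Finset A)
    (hS : IsNUniversal A K (n + 1) S) (t : A) (ht : t ∈ S)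
    (hmax : ∀ s ∈ S, addVal A (∏ u ∈ S.erase s, (s - u)) ≤
      addVal A (∏ u ∈ S.erase t, (t - u)))
    (hcard : (S.erase t).card = n + 1) :
    IsNUniversal A K n (S.erase t) := by
  intro P hP
  constructor
  · intro h s _
    exact h s
  · intro h
    refine (hS P (hP.trans (Nat.le_succ n))).mpr ?_
    intro s hs
    by_cases hst : s = t
    · subst hst
      -- rename for readability: `s` is the erased maximizer
      set S' := S.erase s with hS'def
      have halg : Function.Injective (algebraMap A K) := IsFractionRing.injective A K
      set v : A → K := fun a => algebraMap A K a with hv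
      have hinj : Set.InjOn v ↑S' := fun x _ y _ hxy => halg hxy
      have hdeg : P.degree < (S'.card : WithBot ℕ) := by
        refine lt_of_le_of_lt P.degree_le_natDegree ?_
        rw [hcard]
        exact_mod_cast Nat.lt_succ_of_le hP
      have hPint := Lagrange.eq_interpolate hinj hdeg
      suffices hmem : Polynomial.eval (algebraMap A K s) P ∈ (algebraMap A K).range by
        obtain ⟨b, hb⟩ := hmem
        exact ⟨b, hb.symm⟩
      rw [hPint, Lagrange.interpolate_apply, Polynomial.eval_finset_sum]
      refine Subring.sum_mem _ fun i hi => ?_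
      rw [eval_mul, eval_C, Lagrange.basis, Polynomial.eval_prod]
      obtain ⟨b, hb⟩ := h i hi
      have hterm : ∀ j ∈ S'.erase i,
          Polynomial.eval (algebraMap A K s) (Lagrange.basisDivisor (v i) (v j)) =
            (v i - v j)⁻¹ * (v s - v j) := by
        intro j _
        simp [Lagrange.basisDivisor, hv]
      rw [Finset.prod_congr rfl hterm, Finset.prod_mul_distrib]
      -- the two products over `A`
      have hiS : i ∈ S := Finset.mem_of_mem_erase hi
      have his : i ≠ s := (Finset.mem_erase.mp hi).1
      -- divisibility of products of differences
      have hdvd : (∏ j ∈ S'.erase i, (i - j)) ∣ (∏ j ∈ S'.erase i, (s - j)) := by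
        have hsmem : s ∈ S.erase i := Finset.mem_erase.mpr ⟨fun hsi => his hsi.symm, ht⟩
        have h1 : (∏ u ∈ S.erase i, (i - u)) =
            (i - s) * ∏ u ∈ S'.erase i, (i - u) := by
          rw [← Finset.mul_prod_erase _ _ hsmem, Finset.erase_right_comm]
        have h2 : (∏ u ∈ S.erase s, (s - u)) =
            (s - i) * ∏ u ∈ S'.erase i, (s - u) := by
          rw [← Finset.mul_prod_erase _ _ hi]
        have hdvd' := addVal_le_iff_dvd.mp (hmax i hiS)
        rw [h1, h2] at hdvd'
        have hne : (i - s : A) ≠ 0 := sub_ne_zero_of_ne his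
        have : (s - i) * ∏ u ∈ S'.erase i, (s - u) =
            (i - s) * -(∏ u ∈ S'.erase i, (s - u)) := by ring
        rw [this, mul_dvd_mul_iff_left hne] at hdvd'
        exact (dvd_neg.mp hdvd')
      obtain ⟨c, hc⟩ := hdvd
      -- identify the product of inverses
      have hDen : (∏ j ∈ S'.erase i, (i - j) : A) ≠ 0 := by
        refine Finset.prod_ne_zero_iff.mpr fun j hj => ?_
        exact sub_ne_zero_of_ne fun hij => (Finset.mem_erase.mp hj).1 hij.symm
      have hDenK : (algebraMap A K) (∏ j ∈ S'.erase i, (i - j)) ≠ 0 := by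
        rwa [map_ne_zero_iff _ halg]
      have hprod1 : (∏ j ∈ S'.erase i, (v i - v j)⁻¹) =
          ((algebraMap A K) (∏ j ∈ S'.erase i, (i - j)))⁻¹ := by
        rw [Finset.prod_inv_distrib]
        congr 1
        rw [map_prod]
        exact Finset.prod_congr rfl fun j _ => by simp [hv]
      have hprod2 : (∏ j ∈ S'.erase i, (v s - v j))
          = (algebraMap A K) (∏ j ∈ S'.erase i, (s - j)) := by
        rw [map_prod]
        simp [hv]
      rw [hprod1, hprod2, hc, map_mul, inv_mul_cancel_left₀ hDenK]
      rw [show eval (v i) P = algebraMap A K b from hb, ← map_mul]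
      exact ⟨b * c, rfl⟩
    · exact h s (Finset.mem_erase.mpr ⟨hst, hs⟩)

/-- In a discrete valuation ring, an `n`-optimal set (an `n`-universal set with exactly
`n + 1` elements) can be ordered to form a Newton sequence: there is an enumeration
`s 0, s 1, …, s n` of the elements of `S` such that for every `m ≤ n` the set
`{s 0, …, s m}` is `m`-universal. -/
theorem stmt6 {A K : Type*} [CommRing A] [IsDomain A] [IsDiscreteValuationRing A] [Field K]
    [Algebra A K] [IsFractionRing A K] (n : ℕ) (S : Finset A)
    (hcard : S.card = n + 1) (hS : IsNUniversal A K n S) :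
    ∃ s : ℕ → A, Set.InjOn s (Set.Iic n) ∧ Finset.image s (Finset.range (n + 1)) = S ∧
      ∀ m : ℕ, m ≤ n → IsNUniversal A K m (Finset.image s (Finset.range (m + 1))) := by
  induction n generalizing S with
  | zero =>
    obtain ⟨a, rfl⟩ := Finset.card_eq_one.mp hcard
    refine ⟨fun _ => a, ?_, by simp, ?_⟩
    · intro x hx y hy _
      simp only [Set.mem_Iic, Nat.le_zero] at hx hy
      rw [hx, hy]
    · intro m hm
      interval_cases m
      simpa using hS
  | succ n ih =>
    have hne : S.Nonempty := Finset.card_pos.mp (by omega)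
    obtain ⟨t, ht, hmax⟩ := S.exists_max_image
      (fun s => addVal A (∏ u ∈ S.erase s, (s - u))) hne
    have hcard' : (S.erase t).card = n + 1 := by
      rw [Finset.card_erase_of_mem ht, hcard]
      omega
    have hS' : IsNUniversal A K n (S.erase t) := key_erase n S hS t ht hmax hcard'
    obtain ⟨s', hinj', himg', huniv'⟩ := ih (S.erase t) hcard' hS'
    refine ⟨fun k => if k ≤ n then s' k else t, ?_, ?_, ?_⟩
    · intro x hx y hy hxy
      simp only [Set.mem_Iic] at hx hy
      by_cases hxn : x ≤ n <;> by_cases hyn : y ≤ n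
      · simp only [if_pos hxn, if_pos hyn] at hxy
        exact hinj' hxn hyn hxy
      · exfalso
        simp only [if_pos hxn, if_neg hyn] at hxy
        have : s' x ∈ S.erase t := by
          rw [← himg']
          exact Finset.mem_image.mpr ⟨x, Finset.mem_range.mpr (by omega), rfl⟩
        rw [hxy] at this
        exact Finset.notMem_erase t S this
      · exfalso
        simp only [if_neg hxn, if_pos hyn] at hxy
        have : s' y ∈ S.erase t := by
          rw [← himg']
          exact Finset.mem_image.mpr ⟨y, Finset.mem_range.mpr (by omega), rfl⟩
        rw [← hxy] at this
        exact Finset.notMem_erase t S this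
      · omega
    · have hsplit : Finset.range (n + 2) = insert (n + 1) (Finset.range (n + 1)) := by
        rw [Finset.range_add_one]
      rw [hsplit, Finset.image_insert, if_neg (by omega : ¬ n + 1 ≤ n)]
      have : Finset.image (fun k => if k ≤ n then s' k else t) (Finset.range (n + 1)) =
          Finset.image s' (Finset.range (n + 1)) := by
        refine Finset.image_congr fun x hx => ?_
        simp only [Finset.mem_coe, Finset.mem_range] at hx
        rw [if_pos (by omega)]
      rw [this, himg', Finset.insert_erase ht]
    · intro m hm
      by_cases hmn : m ≤ n
      · have : Finset.image (fun k => if k ≤ n then s' k else t) (Finset.range (m + 1)) =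
            Finset.image s' (Finset.range (m + 1)) := by
          refine Finset.image_congr fun x hx => ?_
          simp only [Finset.mem_coe, Finset.mem_range] at hx
          rw [if_pos (by omega)]
        rw [this]
        exact huniv' m hmn
      · have hm' : m = n + 1 := by omega
        subst hm'
        have hsplit : Finset.range (n + 2) = insert (n + 1) (Finset.range (n + 1)) := by
          rw [Finset.range_add_one]
        have : Finset.image (fun k => if k ≤ n then s' k else t) (Finset.range (n + 2)) = S := by
          rw [hsplit, Finset.image_insert, if_neg (by omega : ¬ n + 1 ≤ n)]
          have h2 : Finset.image (fun k => if k ≤ n then s' k else t) (Finset.range (n + 1)) =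
              Finset.image s' (Finset.range (n + 1)) := by
            refine Finset.image_congr fun x hx => ?_
            simp only [Finset.mem_coe, Finset.mem_range] at hx
            rw [if_pos (by omega)]
          rw [h2, himg', Finset.insert_erase ht]
        rw [this]
        exact hS
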